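/- arXiv:2209.12346 — 3 statements merged into one kernel-verified Lean document; each statement's English description precedes it below -/
import Mathlib

section
/- In the centipede game with m = 2n decision nodes (n ≥ 1), the profile (0, 0) in which both players stop at their first opportunity is the UNIQUE pure-strategy Nash equilibrium: every pure Nash equilibrium (a, b) satisfies a = 0 and b = 0. -/
/-- Player 1's payoff in the reduced normal form of the centipede game with
`m = 2n` decision nodes.  Strategy `a < n` means "stop at own `(a+1)`-th node";
`a = n` means "always continue". -/
noncomputable def u1 (n : ℕ) (a b : Fin (n + 1)) : ℝ :=
  if a ≤ b ∧ (a : ℕ) < n then 2 * ((a : ℕ) + 1)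
  else if b < a then 2 * ((b : ℕ) + 1) - 1
  else 2 * n + 2

/-- Player 2's payoff in the reduced normal form of the centipede game. -/
noncomputable def u2 (n : ℕ) (a b : Fin (n + 1)) : ℝ :=
  if a ≤ b ∧ (a : ℕ) < n then 2 * ((a : ℕ) + 1) - 1
  else if b < a then 2 * ((b : ℕ) + 1) + 2
  else 2 * n + 1

/-- `(a, b)` is a pure-strategy Nash equilibrium. -/
def IsPureNash (n : ℕ) (a b : Fin (n + 1)) : Prop :=
  (∀ a', u1 n a' b ≤ u1 n a b) ∧ (∀ b', u2 n a b' ≤ u2 n a b)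

/-- In the centipede game with `m = 2n` decision nodes (`n ≥ 1`),
`(0, 0)` is the unique pure-strategy Nash equilibrium. -/
theorem pure_nash_unique (n : ℕ) (hn : 1 ≤ n) (a b : Fin (n + 1))
    (h : IsPureNash n a b) : a = 0 ∧ b = 0 := by
  obtain ⟨h1, h2⟩ := h
  have ha1 : (a : ℕ) ≤ n := Nat.lt_succ_iff.mp a.isLt
  have hb1 : (b : ℕ) ≤ n := Nat.lt_succ_iff.mp b.isLt
  -- Step 1: a ≤ b
  have hab : a ≤ b := by
    by_contra hab
    have hba : b < a := lt_of_not_ge hab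
    have hbn : (b : ℕ) < n := lt_of_lt_of_le (Fin.lt_def.mp hba) ha1
    have key := h1 b
    have e1 : u1 n b b = 2 * ((b : ℕ) + 1) := by
      rw [u1, if_pos ⟨le_refl b, hbn⟩]
    have e2 : u1 n a b = 2 * ((b : ℕ) + 1) - 1 := by
      rw [u1, if_neg (fun hc => hab hc.1), if_pos hba]
    rw [e1, e2] at key
    linarith
  -- Step 2: (a : ℕ) < n
  have han : (a : ℕ) < n := by
    by_contra hna
    have haeq : (a : ℕ) = n := le_antisymm ha1 (le_of_not_gt hna)
    have hbeq : (b : ℕ) = n := by have := Fin.le_def.mp hab; omega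
    have hnb : ¬ b < a := by simp [Fin.lt_def, haeq, hbeq]
    set b' : Fin (n + 1) := ⟨n - 1, by omega⟩ with hb'
    have hb'a : b' < a := by simp [Fin.lt_def, haeq, hb']; omega
    have key := h2 b'
    have e1 : u2 n a b' = 2 * ((n : ℝ) - 1 + 1) + 2 := by
      rw [u2, if_neg (fun hc => hna hc.2), if_pos hb'a]
      have : ((b' : ℕ) : ℝ) = (n : ℝ) - 1 := by
        have h1 : (b' : ℕ) = n - 1 := rfl
        rw [h1]
        push_cast [Nat.cast_sub hn]
        ring
      rw [this]
    have e2 : u2 n a b = 2 * (n : ℝ) + 1 := by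
      rw [u2, if_neg (fun hc => hna hc.2), if_neg hnb]
    rw [e1, e2] at key
    linarith
  -- Step 3: a = 0
  have ha0 : (a : ℕ) = 0 := by
    by_contra ha0
    have hapos : 1 ≤ (a : ℕ) := Nat.one_le_iff_ne_zero.mpr ha0
    set b' : Fin (n + 1) := ⟨(a : ℕ) - 1, by omega⟩ with hb'
    have hb'a : b' < a := by rw [Fin.lt_def, hb']; show (a : ℕ) - 1 < a; omega
    have key := h2 b'
    have e1 : u2 n a b' = 2 * ((a : ℕ) : ℝ) + 2 := by
      rw [u2, if_neg (fun hc => absurd hb'a (not_lt_of_ge hc.1)), if_pos hb'a]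
      have : ((b' : ℕ) : ℝ) + 1 = ((a : ℕ) : ℝ) := by
        have h1 : (b' : ℕ) + 1 = (a : ℕ) := by
          simp only [hb']
          omega
        exact_mod_cast h1
      rw [this]
    have e2 : u2 n a b = 2 * (((a : ℕ) : ℝ) + 1) - 1 := by
      rw [u2, if_pos ⟨hab, han⟩]
    rw [e1, e2] at key
    linarith
  -- Step 4: b = 0
  have hb0 : (b : ℕ) = 0 := by
    by_contra hb0
    have hbpos : 1 ≤ (b : ℕ) := Nat.one_le_iff_ne_zero.mpr hb0
    have key := h1 b
    have e2 : u1 n a b = 2 * (((a : ℕ) : ℝ) + 1) := by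
      rw [u1, if_pos ⟨hab, han⟩]
    have ha0' : ((a : ℕ) : ℝ) = 0 := by exact_mod_cast ha0
    have hb1' : (1 : ℝ) ≤ ((b : ℕ) : ℝ) := by exact_mod_cast hbpos
    have hn1 : (1 : ℝ) ≤ (n : ℝ) := by exact_mod_cast hn
    by_cases hbn : (b : ℕ) < n
    · have e1 : u1 n b b = 2 * (((b : ℕ) : ℝ) + 1) := by
        rw [u1, if_pos ⟨le_refl b, hbn⟩]
      rw [e1, e2, ha0'] at key
      linarith
    · have e1 : u1 n b b = 2 * (n : ℝ) + 2 := by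
        rw [u1, if_neg (fun hc => hbn hc.2), if_neg (lt_irrefl b)]
      rw [e1, e2, ha0'] at key
      linarith
  exact ⟨Fin.ext ha0, Fin.ext hb0⟩
end

section
/- In the centipede game with m = 2n decision nodes (n ≥ 1), every mixed-strategy Nash equilibrium (σ, τ) satisfies σ(0) = 1; that is, if both players best-respond to each other, player 1 stops at the first node with probability 1. -/
open Finset

/-- A mixed strategy: a probability vector on `Fin (n+1)`. -/
def IsMixed {n : ℕ} (σ : Fin (n + 1) → ℝ) : Prop :=
  (∀ a, 0 ≤ σ a) ∧ ∑ a, σ a = 1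

/-- Expected payoff under mixed strategies `σ` (player 1) and `τ` (player 2). -/
noncomputable def Eu {n : ℕ} (u : Fin (n + 1) → Fin (n + 1) → ℝ)
    (σ τ : Fin (n + 1) → ℝ) : ℝ :=
  ∑ a, ∑ b, σ a * τ b * u a b

/-- `(σ, τ)` is a (mixed) Nash equilibrium. -/
def IsNash (n : ℕ) (σ τ : Fin (n + 1) → ℝ) : Prop :=
  IsMixed σ ∧ IsMixed τ ∧
    (∀ σ', IsMixed σ' → Eu (u1 n) σ' τ ≤ Eu (u1 n) σ τ) ∧
    (∀ τ', IsMixed τ' → Eu (u2 n) σ τ' ≤ Eu (u2 n) σ τ)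

/-- The point mass on the pure strategy `a0`. -/
noncomputable def delta {n : ℕ} (a0 : Fin (n + 1)) : Fin (n + 1) → ℝ :=
  fun a => if a = a0 then 1 else 0

/- Auxiliary lemmas. -/

lemma u1_first {n : ℕ} {a b : Fin (n+1)} (h1 : (a:ℕ) ≤ (b:ℕ)) (h2 : (a:ℕ) < n) :
    u1 n a b = 2 * ((a : ℕ) + 1) := by
  unfold u1; rw [if_pos ⟨Fin.le_def.2 h1, h2⟩]

lemma u1_second {n : ℕ} {a b : Fin (n+1)} (h : (b:ℕ) < (a:ℕ)) :
    u1 n a b = 2 * ((b : ℕ) + 1) - 1 := by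
  unfold u1
  rw [if_neg, if_pos (Fin.lt_def.2 h)]
  rintro ⟨hle, -⟩
  exact absurd (Fin.le_def.1 hle) (by omega)

lemma u2_second {n : ℕ} {a b : Fin (n+1)} (h : (b:ℕ) < (a:ℕ)) :
    u2 n a b = 2 * ((b : ℕ) + 1) + 2 := by
  unfold u2
  rw [if_neg, if_pos (Fin.lt_def.2 h)]
  rintro ⟨hle, -⟩
  exact absurd (Fin.le_def.1 hle) (by omega)

lemma u2_follow {n : ℕ} {a b : Fin (n+1)} (h1 : (a:ℕ) ≤ (b:ℕ)) :
    u2 n a b = 2 * (a : ℕ) + 1 := by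
  unfold u2
  by_cases h2 : (a:ℕ) < n
  · rw [if_pos ⟨Fin.le_def.2 h1, h2⟩]; ring
  · have han : (a:ℕ) = n := by have := a.isLt; omega
    rw [if_neg (fun hx => h2 hx.2), if_neg (fun hx => absurd (Fin.lt_def.1 hx) (by omega))]
    rw [han]

lemma delta_mixed {n : ℕ} (a0 : Fin (n + 1)) : IsMixed (delta a0) := by
  constructor
  · intro a; unfold delta; split <;> norm_num
  · simp [delta]

lemma Eu_eq_left {n : ℕ} (u : Fin (n+1) → Fin (n+1) → ℝ) (σ τ : Fin (n+1) → ℝ) :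
    Eu u σ τ = ∑ a, σ a * ∑ b, τ b * u a b := by
  unfold Eu
  refine Finset.sum_congr rfl fun a _ => ?_
  rw [Finset.mul_sum]
  exact Finset.sum_congr rfl fun b _ => by ring

lemma Eu_eq_right {n : ℕ} (u : Fin (n+1) → Fin (n+1) → ℝ) (σ τ : Fin (n+1) → ℝ) :
    Eu u σ τ = ∑ b, τ b * ∑ a, σ a * u a b := by
  unfold Eu
  rw [Finset.sum_comm]
  refine Finset.sum_congr rfl fun b _ => ?_
  rw [Finset.mul_sum]
  exact Finset.sum_congr rfl fun a _ => by ring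

lemma Eu_delta_left {n : ℕ} (u : Fin (n+1) → Fin (n+1) → ℝ) (a0 : Fin (n+1)) (τ : Fin (n+1) → ℝ) :
    Eu u (delta a0) τ = ∑ b, τ b * u a0 b := by
  rw [Eu_eq_left]
  simp [delta, ite_mul]

lemma Eu_delta_right {n : ℕ} (u : Fin (n+1) → Fin (n+1) → ℝ) (σ : Fin (n+1) → ℝ) (b0 : Fin (n+1)) :
    Eu u σ (delta b0) = ∑ a, σ a * u a b0 := by
  rw [Eu_eq_right]
  simp [delta, ite_mul]

/-- Every strategy in the support of a mixed strategy is a best response. -/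
lemma support_best {n : ℕ} {σ f : Fin (n+1) → ℝ} (hσ : IsMixed σ)
    (hN : ∀ a', f a' ≤ ∑ a, σ a * f a) {a0 : Fin (n+1)} (h0 : 0 < σ a0) :
    ∀ a', f a' ≤ f a0 := by
  obtain ⟨am, -, ham⟩ := Finset.exists_max_image (univ : Finset (Fin (n+1))) f ⟨a0, mem_univ _⟩
  intro a'
  have key : f a0 = f am := by
    by_contra hne
    have hlt : f a0 < f am := lt_of_le_of_ne (ham a0 (mem_univ _)) hne
    have h1 : ∑ a, σ a * f a < ∑ a, σ a * f am := by
      apply Finset.sum_lt_sum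
      · intro i _; exact mul_le_mul_of_nonneg_left (ham i (mem_univ _)) (hσ.1 i)
      · exact ⟨a0, mem_univ _, by nlinarith⟩
    rw [← Finset.sum_mul, hσ.2, one_mul] at h1
    exact absurd (hN am) (not_le.2 h1)
  calc f a' ≤ f am := ham a' (mem_univ _)
    _ = f a0 := key.symm

/-- In every mixed-strategy Nash equilibrium `(σ, τ)` of the
centipede game with `m = 2n` nodes (`n ≥ 1`), player 1 stops at the first
node with probability 1: `σ 0 = 1`. -/
theorem nash_sigma_zero_eq_one (n : ℕ) (hn : 1 ≤ n)
    (σ τ : Fin (n + 1) → ℝ) (h : IsNash n σ τ) : σ 0 = 1 := by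
  obtain ⟨hσ, hτ, hN1, hN2⟩ := h
  by_contra h01
  set f : Fin (n+1) → ℝ := fun a => ∑ b, τ b * u1 n a b with hfdef
  set g : Fin (n+1) → ℝ := fun b => ∑ a, σ a * u2 n a b with hgdef
  have hBR1 : ∀ a0, 0 < σ a0 → ∀ a', f a' ≤ f a0 := by
    intro a0 h0
    refine support_best hσ (fun a' => ?_) h0
    have hh := hN1 (delta a') (delta_mixed a')
    rw [Eu_delta_left, Eu_eq_left] at hh
    exact hh
  have hBR2 : ∀ b0, 0 < τ b0 → ∀ b', g b' ≤ g b0 := by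
    intro b0 h0
    refine support_best hτ (fun b' => ?_) h0
    have hh := hN2 (delta b') (delta_mixed b')
    rw [Eu_delta_right, Eu_eq_right] at hh
    exact hh
  -- σ must put positive weight on some nonzero strategy
  have hex : ∃ a : Fin (n+1), a ≠ 0 ∧ 0 < σ a := by
    by_contra hc
    push_neg at hc
    have hz : ∀ b ∈ (univ : Finset (Fin (n+1))), b ≠ 0 → σ b = 0 :=
      fun b _ hb => le_antisymm (hc b hb) (hσ.1 b)
    have hs := hσ.2
    rw [Finset.sum_eq_single 0 hz (by simp)] at hs
    exact h01 hs
  obtain ⟨aw, haw0, hawpos⟩ := hex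
  have hSσ : (univ.filter fun a : Fin (n+1) => 0 < σ a).Nonempty := ⟨aw, by simp [hawpos]⟩
  set A := (univ.filter fun a : Fin (n+1) => 0 < σ a).max' hSσ with hAdef
  have hApos : 0 < σ A := by
    have hm := Finset.max'_mem _ hSσ
    simp only [Finset.mem_filter] at hm
    exact hm.2
  have hAmax : ∀ a, 0 < σ a → a ≤ A := fun a ha => Finset.le_max' _ a (by simp [ha])
  have hA1 : 1 ≤ (A : ℕ) := by
    have h1 := Fin.le_def.1 (hAmax aw hawpos)
    have h2 : (aw:ℕ) ≠ 0 := fun h => haw0 (Fin.ext (by simp [h]))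
    omega
  have hAn : (A : ℕ) ≤ n := by have := A.isLt; omega
  set p : Fin (n+1) := ⟨(A:ℕ) - 1, by omega⟩ with hpdef
  have hpv : (p : ℕ) = (A:ℕ) - 1 := rfl
  -- Claim A : τ puts no weight at or above A
  have claimA : ∀ b : Fin (n+1), 0 < τ b → (b:ℕ) < (A:ℕ) := by
    intro b0 hb0
    by_contra hge
    push_neg at hge
    have hgp : g p ≤ g b0 := hBR2 b0 hb0 p
    have key : ∑ a, (σ a * u2 n a p - σ a * u2 n a b0) = σ A := by
      rw [show σ A = ∑ a : Fin (n+1), (if a = A then σ A else 0) by simp]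
      refine Finset.sum_congr rfl fun a _ => ?_
      by_cases hAa : a = A
      · subst hAa
        rw [if_pos rfl, u2_second (by omega : (p:ℕ) < (A:ℕ)), u2_follow hge, hpv,
          Nat.cast_sub hA1]
        push_cast
        ring
      · rw [if_neg hAa]
        by_cases hsa : σ a = 0
        · rw [hsa]; ring
        · have hapos : 0 < σ a := lt_of_le_of_ne (hσ.1 a) (Ne.symm hsa)
          have hle := Fin.le_def.1 (hAmax a hapos)
          have hlt : (a:ℕ) < (A:ℕ) := lt_of_le_of_ne hle (by simpa [Fin.ext_iff] using hAa)
          rw [u2_follow (by omega : (a:ℕ) ≤ (p:ℕ)), u2_follow (by omega : (a:ℕ) ≤ (b0:ℕ))]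
          ring
    rw [Finset.sum_sub_distrib] at key
    have : g p - g b0 = σ A := key
    linarith
  -- τ has nonempty support
  have hexb : ∃ b : Fin (n+1), 0 < τ b := by
    by_contra hc
    push_neg at hc
    have hz : ∀ b ∈ (univ : Finset (Fin (n+1))), τ b = 0 :=
      fun b _ => le_antisymm (hc b) (hτ.1 b)
    have hs := hτ.2
    rw [Finset.sum_eq_zero hz] at hs
    norm_num at hs
  obtain ⟨bw, hbwpos⟩ := hexb
  have hSτ : (univ.filter fun b : Fin (n+1) => 0 < τ b).Nonempty := ⟨bw, by simp [hbwpos]⟩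
  set B := (univ.filter fun b : Fin (n+1) => 0 < τ b).max' hSτ with hBdef
  have hBpos : 0 < τ B := by
    have hm := Finset.max'_mem _ hSτ
    simp only [Finset.mem_filter] at hm
    exact hm.2
  have hBmax : ∀ b, 0 < τ b → b ≤ B := fun b hb => Finset.le_max' _ b (by simp [hb])
  have hBA : (B:ℕ) < (A:ℕ) := claimA B hBpos
  have hBn : (B:ℕ) < n := lt_of_lt_of_le hBA hAn
  -- Claim B : A cannot be a best response for player 1
  have hfBA : f B ≤ f A := hBR1 A hApos B
  have key2 : ∑ b, (τ b * u1 n B b - τ b * u1 n A b) = τ B := by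
    rw [show τ B = ∑ b : Fin (n+1), (if b = B then τ B else 0) by simp]
    refine Finset.sum_congr rfl fun b _ => ?_
    by_cases hBb : b = B
    · subst hBb
      rw [if_pos rfl, u1_first (le_refl _) hBn, u1_second hBA]
      ring
    · rw [if_neg hBb]
      by_cases hsb : τ b = 0
      · rw [hsb]; ring
      · have hbpos : 0 < τ b := lt_of_le_of_ne (hτ.1 b) (Ne.symm hsb)
        have hle := Fin.le_def.1 (hBmax b hbpos)
        have hlt : (b:ℕ) < (B:ℕ) := lt_of_le_of_ne hle (by simpa [Fin.ext_iff] using hBb)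
        rw [u1_second hlt, u1_second (by omega : (b:ℕ) < (A:ℕ))]
        ring
  rw [Finset.sum_sub_distrib] at key2
  have hfb : f B - f A = τ B := key2
  linarith
end

section
/- In the centipede game with m = 2n decision nodes (n ≥ 1), if τ* is a best response of player 2 to player 1's mixed strategy σ (i.e., τ* maximizes Eu₂(σ, ·) over all mixed strategies of player 2), then Eu₂(σ, τ*) ≥ 4 − 3·σ(0). -/
open Finset

/-- If `τ*` is a best response of player 2 to player 1's mixed
strategy `σ`, then `Eu₂(σ, τ*) ≥ 4 − 3·σ(0)`. -/
theorem best_response_payoff_lower_bound (n : ℕ) (hn : 1 ≤ n)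
    (σ τstar : Fin (n + 1) → ℝ) (hσ : IsMixed σ) (hτ : IsMixed τstar)
    (hbr : ∀ τ', IsMixed τ' → Eu (u2 n) σ τ' ≤ Eu (u2 n) σ τstar) :
    Eu (u2 n) σ τstar ≥ 4 - 3 * σ 0 := by
  have hmix : IsMixed (delta (0 : Fin (n + 1))) := by
    constructor
    · intro a; unfold delta; split <;> norm_num
    · simp [delta]
  have hval : Eu (u2 n) σ (delta (0 : Fin (n + 1))) = 4 - 3 * σ 0 := by
    unfold Eu delta
    have h1 : ∀ a : Fin (n + 1),
        ∑ b, σ a * (if b = (0 : Fin (n+1)) then (1:ℝ) else 0) * u2 n a b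
          = σ a * u2 n a 0 := by
      intro a
      rw [Finset.sum_eq_single (0 : Fin (n+1))]
      · simp
      · intro b _ hb; simp [hb]
      · simp
    rw [Finset.sum_congr rfl fun a _ => h1 a]
    have h2 : ∀ a : Fin (n + 1),
        σ a * u2 n a 0 = 4 * σ a - 3 * (if a = 0 then σ a else 0) := by
      intro a
      by_cases ha : a = 0
      · subst ha
        have : u2 n 0 0 = 1 := by
          unfold u2
          rw [if_pos ⟨le_refl _, by simp; omega⟩]
          norm_num
        rw [this]; simp; ring
      · have hpos : (0 : Fin (n+1)) < a := by
          rcases lt_or_eq_of_le (Fin.zero_le a) with h | h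
          · exact h
          · exact absurd h.symm ha
        have : u2 n a 0 = 4 := by
          unfold u2
          rw [if_neg, if_pos hpos]
          · norm_num
          · rintro ⟨hle, -⟩
            exact absurd (le_antisymm hle (Fin.zero_le a)) ha
        rw [this]; simp [ha]; ring
    rw [Finset.sum_congr rfl fun a _ => h2 a]
    rw [Finset.sum_sub_distrib, ← Finset.mul_sum, hσ.2, ← Finset.mul_sum]
    simp
  have := hbr (delta (0 : Fin (n + 1))) hmix
  rw [hval] at this
  linarith
end
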